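/- arXiv:2202.06249 — 2 statements merged into one kernel-verified Lean document; each statement's English description precedes it below -/
import Mathlib

section
/- Let Y be any graph in the family 𝒴_{k+1,ℓ+1}, i.e., obtained from a path P_{k+1} by attaching a path P_{ℓ+1} at an internal vertex. Then for every p ≥ 2 and m = |V(C_{k,ℓ}^{p+1})|, the edge blow-up C_{k,ℓ}^{p+1} is a subgraph of Y ∨ K_{p-1}(m, m, …, m). -/
open SimpleGraph

/-- The lollipop `C_{k,ℓ}`: a cycle on vertices `0,…,k-1` together with a pendant
path `0, k, k+1, …, k+ℓ-1` appended to the cycle vertex `0` (the *center*). -/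
def lollipop (k l : ℕ) : SimpleGraph (Fin (k + l)) :=
  SimpleGraph.fromRel (fun a b =>
    (b.val = a.val + 1 ∧ b.val < k) ∨ (a.val = 0 ∧ b.val = k - 1) ∨
    (a.val = 0 ∧ b.val = k) ∨ (b.val = a.val + 1 ∧ k ≤ a.val))

/-- The edge blow-up `H^{p+1}` of a graph `H`: each edge of `H` is replaced by a
clique of order `p+1`, the `p-1` new vertices of the cliques being all distinct. -/
def edgeBlowup {V : Type*} (H : SimpleGraph V) (p : ℕ) :
    SimpleGraph (V ⊕ (H.edgeSet × Fin (p - 1))) where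
  Adj x y := match x, y with
    | .inl a, .inl b => H.Adj a b
    | .inl a, .inr e => a ∈ (e.1 : Sym2 V)
    | .inr e, .inl a => a ∈ (e.1 : Sym2 V)
    | .inr e, .inr f => e.1 = f.1 ∧ e.2 ≠ f.2
  symm := ⟨by rintro (a | e) (b | f) h <;> simp_all <;> tauto⟩
  loopless := ⟨by rintro (a | e) h <;> simp_all⟩

/-- `A` is contained in `B` as a subgraph (there is an injective graph homomorphism). -/
def IsCont {α β : Type*} (A : SimpleGraph α) (B : SimpleGraph β) : Prop :=
  ∃ f : α → β, Function.Injective f ∧ ∀ ⦃a b⦄, A.Adj a b → B.Adj (f a) (f b)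

/-- The join `G ∨ H` of two graphs: all edges between the two graphs are added. -/
def gJoin {α β : Type*} (G : SimpleGraph α) (H : SimpleGraph β) : SimpleGraph (α ⊕ β) where
  Adj x y := match x, y with
    | .inl a, .inl b => G.Adj a b
    | .inr a, .inr b => H.Adj a b
    | .inl _, .inr _ => True
    | .inr _, .inl _ => True
  symm := ⟨by rintro (a | a) (b | b) h <;> first | exact h.symm | trivial⟩
  loopless := ⟨by rintro (a | a) h <;> first | exact G.irrefl h | exact H.irrefl h⟩

/-- The disjoint union of two graphs. -/
def dUnion {α β : Type*} (G : SimpleGraph α) (H : SimpleGraph β) : SimpleGraph (α ⊕ β) where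
  Adj x y := match x, y with
    | .inl a, .inl b => G.Adj a b
    | .inr a, .inr b => H.Adj a b
    | _, _ => False
  symm := ⟨by rintro (a | a) (b | b) h <;> first | exact h.symm | exact h⟩
  loopless := ⟨by rintro (a | a) h <;> first | exact G.irrefl h | exact H.irrefl h⟩

/-- `a` vertex-disjoint copies of the graph `G`. -/
def copies {β : Type*} (a : ℕ) (G : SimpleGraph β) : SimpleGraph (Fin a × β) where
  Adj x y := x.1 = y.1 ∧ G.Adj x.2 y.2
  symm := ⟨by rintro x y ⟨h1, h2⟩; exact ⟨h1.symm, h2.symm⟩⟩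
  loopless := ⟨by rintro x ⟨h1, h2⟩; exact G.irrefl h2⟩

/-- The complete multipartite graph `K_{p}(m,…,m)` with `p` parts of size `m`. -/
def completeMultipartite (p m : ℕ) : SimpleGraph (Fin p × Fin m) where
  Adj x y := x.1 ≠ y.1
  symm := ⟨fun _ _ h => h.symm⟩

/-- `H(n,p,q) = K_{q-1} ∨ T_p(n-q+1)`. -/
def Hgraph (n p q : ℕ) : SimpleGraph (Fin (q - 1) ⊕ Fin (n - (q - 1))) :=
  gJoin (completeGraph (Fin (q - 1))) (turanGraph (n - (q - 1)) p)

/-- The number of edges of a graph. -/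
noncomputable def numEdges {α : Type*} (G : SimpleGraph α) : ℕ := Nat.card G.edgeSet

/-- `E` (a graph on `n` vertices) is the unique extremal `H`-free graph on `n`
vertices: it is `H`-free, every `H`-free graph on `n` vertices has at most as many
edges, and any `H`-free graph attaining this maximum is isomorphic to `E`. -/
def UniqueExtremal {W α : Type*} (H : SimpleGraph W) (n : ℕ) (E : SimpleGraph α) : Prop :=
  ¬ IsCont H E ∧ Nat.card α = n ∧
    ∀ G : SimpleGraph (Fin n), ¬ IsCont H G →
      numEdges G ≤ numEdges E ∧ (numEdges G = numEdges E → Nonempty (G ≃g E))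

/-- The member of the family `𝒴_{k+1,ℓ+1}` obtained from the path `P_{k+1}`
(on `Fin (k+1)`) by appending a path `P_{ℓ+1}` to its vertex `j` (the branching
vertex), the appended path having the `ℓ` extra vertices `Fin l`. -/
def Ygraph (k l j : ℕ) : SimpleGraph (Fin (k + 1) ⊕ Fin l) :=
  SimpleGraph.fromRel (fun x y => match x, y with
    | .inl a, .inl b => b.val = a.val + 1
    | .inl a, .inr b => a.val = j ∧ b.val = 0
    | .inr a, .inr b => b.val = a.val + 1
    | _, _ => False)

/-- The graph obtained from `H` by splitting every vertex of `U`: each `v ∈ U`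
is replaced by `deg v` new vertices, one for each neighbor `w` of `v`, joined to
`w` only. -/
def splitGraph {V : Type*} (H : SimpleGraph V) (U : Set V) :
    SimpleGraph ({v : V // v ∉ U} ⊕ {p : V × V // p.1 ∈ U ∧ H.Adj p.1 p.2}) where
  Adj x y := match x, y with
    | .inl a, .inl b => H.Adj a.1 b.1
    | .inl a, .inr e => e.1.2 = a.1
    | .inr e, .inl a => e.1.2 = a.1
    | .inr _, .inr _ => False
  symm := ⟨by rintro (a | e) (b | f) h <;> first | exact h.symm | exact h⟩
  loopless := ⟨by rintro (a | e) h <;> simp_all⟩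

lemma lolli_adj {k l : ℕ} {a b : Fin (k + l)} :
    (lollipop k l).Adj a b ↔ a ≠ b ∧
      ((b.val = a.val + 1 ∧ b.val < k) ∨ (a.val = 0 ∧ b.val = k - 1) ∨
       (a.val = 0 ∧ b.val = k) ∨ (b.val = a.val + 1 ∧ k ≤ a.val) ∨
       (a.val = b.val + 1 ∧ a.val < k) ∨ (b.val = 0 ∧ a.val = k - 1) ∨
       (b.val = 0 ∧ a.val = k) ∨ (a.val = b.val + 1 ∧ k ≤ b.val)) := by
  rw [lollipop, SimpleGraph.fromRel_adj]
  constructor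
  · rintro ⟨h1, h2⟩
    exact ⟨h1, by omega⟩
  · rintro ⟨h1, h2⟩
    refine ⟨h1, ?_⟩
    rcases h2 with h|h|h|h|h|h|h|h
    exacts [Or.inl (Or.inl h), Or.inl (Or.inr (Or.inl h)), Or.inl (Or.inr (Or.inr (Or.inl h))),
      Or.inl (Or.inr (Or.inr (Or.inr h))), Or.inr (Or.inl h), Or.inr (Or.inr (Or.inl h)),
      Or.inr (Or.inr (Or.inr (Or.inl h))), Or.inr (Or.inr (Or.inr (Or.inr h)))]

lemma Yadj_path {k l j : ℕ} {x y : Fin (k + 1)} (h : y.val = x.val + 1) :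
    (Ygraph k l j).Adj (.inl x) (.inl y) := by
  rw [Ygraph, SimpleGraph.fromRel_adj]
  refine ⟨fun he => ?_, Or.inl h⟩
  rw [Sum.inl.injEq] at he
  rw [he] at h; omega

lemma Yadj_branch {k l j : ℕ} {x : Fin (k + 1)} {y : Fin l} (hx : x.val = j) (hy : y.val = 0) :
    (Ygraph k l j).Adj (.inl x) (.inr y) := by
  rw [Ygraph, SimpleGraph.fromRel_adj]
  exact ⟨by simp, Or.inl ⟨hx, hy⟩⟩

lemma Yadj_tail {k l j : ℕ} {x y : Fin l} (h : y.val = x.val + 1) :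
    (Ygraph k l j).Adj (.inr x) (.inr y) := by
  rw [Ygraph, SimpleGraph.fromRel_adj]
  refine ⟨fun he => ?_, Or.inl h⟩
  rw [Sum.inr.injEq] at he
  rw [he] at h; omega

lemma pos_eq {k v u : ℕ} (hv1 : 1 ≤ v) (hvk : v < k) (hu : u < k) :
    (u + (k - v)) % k = if u < v then u + (k - v) else u - v := by
  split
  · exact Nat.mod_eq_of_lt (by omega)
  · have h : u + (k - v) = (u - v) + 1 * k := by omega
    rw [h, Nat.add_mul_mod_self_right]
    exact Nat.mod_eq_of_lt (by omega)

lemma mod_alt {k v : ℕ} (hv1 : 1 ≤ v) (hvk : v < k) :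
    ((v + 1) % k = v + 1 ∧ v + 1 < k) ∨ ((v + 1) % k = 0 ∧ v + 1 = k) := by
  rcases Nat.lt_or_ge (v + 1) k with h | h
  · exact Or.inl ⟨Nat.mod_eq_of_lt h, h⟩
  · have hvv : v + 1 = k := by omega
    right; rw [hvv, Nat.mod_self]; exact ⟨rfl, rfl⟩

def cyEdge1 (k l v : ℕ) (h1 : 1 ≤ v) (h2 : v < k) : Sym2 (Fin (k + l)) :=
  s(⟨v - 1, by omega⟩, ⟨v, by omega⟩)

def cyEdge2 (k l v : ℕ) (h1 : 1 ≤ v) (h2 : v < k) : Sym2 (Fin (k + l)) :=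
  s(⟨v, by omega⟩, ⟨(v + 1) % k, Nat.lt_of_lt_of_le (Nat.mod_lt _ (by omega)) (by omega)⟩)

lemma lolli_nbr_v {k l v : ℕ} (hv1 : 1 ≤ v) (hvk : v < k)
    {a b : Fin (k + l)} (ha : a.val = v) (h : (lollipop k l).Adj a b) :
    b.val = v - 1 ∨ b.val = (v + 1) % k := by
  rw [lolli_adj] at h
  obtain ⟨-, h⟩ := h
  have hw := mod_alt hv1 hvk
  have hb := b.isLt
  rcases hw with ⟨hw, hw'⟩ | ⟨hw, hw'⟩ <;> rw [hw] <;> omega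

lemma edge_at_v {k l v : ℕ} (hk : 3 ≤ k) (hv1 : 1 ≤ v) (hvk : v < k)
    (e : Sym2 (Fin (k + l))) (he : e ∈ (lollipop k l).edgeSet)
    (hmm : (⟨v, by omega⟩ : Fin (k + l)) ∈ e) :
    e = cyEdge1 k l v hv1 hvk ∨ e = cyEdge2 k l v hv1 hvk := by
  induction e using Sym2.ind with
  | _ x y =>
    rw [SimpleGraph.mem_edgeSet] at he
    rw [Sym2.mem_iff] at hmm
    rw [cyEdge1, cyEdge2]
    rcases hmm with hv | hv
    · have := lolli_nbr_v hv1 hvk (a := x) (by rw [← hv]) he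
      rcases this with hb | hb
      · exact Or.inl (Sym2.eq_iff.mpr (Or.inr ⟨hv.symm, Fin.ext hb⟩))
      · exact Or.inr (Sym2.eq_iff.mpr (Or.inl ⟨hv.symm, Fin.ext hb⟩))
    · have := lolli_nbr_v hv1 hvk (a := y) (by rw [← hv]) he.symm
      rcases this with hb | hb
      · exact Or.inl (Sym2.eq_iff.mpr (Or.inl ⟨Fin.ext hb, hv.symm⟩))
      · exact Or.inr (Sym2.eq_iff.mpr (Or.inr ⟨Fin.ext hb, hv.symm⟩))

def sFun (k l p M v : ℕ) (hp1 : 0 < p - 1) (hv1 : 1 ≤ v) (hvk : v < k)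
    (E : (Fin (k + l) ⊕ ((lollipop k l).edgeSet × Fin (p - 1))) ≃ Fin M) :
    (Fin (k + l) ⊕ ((lollipop k l).edgeSet × Fin (p - 1))) →
      ((Fin (k + 1) ⊕ Fin l) ⊕ (Fin (p - 1) × Fin M)) := fun x =>
  match x with
  | .inl u =>
      if u.val = v then .inr (⟨0, hp1⟩, E (.inl ⟨0, by omega⟩))
      else if h : u.val < k then
        .inl (.inl ⟨(u.val + (k - v)) % k, Nat.lt_succ_of_lt (Nat.mod_lt _ (by omega))⟩)
      else .inl (.inr ⟨u.val - k, by omega⟩)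
  | .inr (e, i) =>
      if (e : Sym2 (Fin (k + l))) = cyEdge1 k l v hv1 hvk ∧ i.val = 0 then
        .inl (.inl ⟨k, by omega⟩)
      else if (e : Sym2 (Fin (k + l))) = cyEdge2 k l v hv1 hvk ∧ i.val = 0 then
        .inl (.inl ⟨0, by omega⟩)
      else .inr (i, E (.inr (e, ⟨0, hp1⟩)))

lemma gYadj_path {k l j : ℕ} {β : Type*} {H : SimpleGraph β} {x y : Fin (k + 1)}
    (h : y.val = x.val + 1) :
    (gJoin (Ygraph k l j) H).Adj (.inl (.inl x)) (.inl (.inl y)) := Yadj_path (j := j) h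

lemma gYadj_branch {k l j : ℕ} {β : Type*} {H : SimpleGraph β} {x : Fin (k + 1)} {y : Fin l}
    (hx : x.val = j) (hy : y.val = 0) :
    (gJoin (Ygraph k l j) H).Adj (.inl (.inl x)) (.inl (.inr y)) := Yadj_branch (j := j) hx hy

lemma gYadj_tail {k l j : ℕ} {β : Type*} {H : SimpleGraph β} {x y : Fin l}
    (h : y.val = x.val + 1) :
    (gJoin (Ygraph k l j) H).Adj (.inl (.inr x)) (.inl (.inr y)) := Yadj_tail (j := j) (k := k) h

/-- For any graph `Y ∈ 𝒴_{k+1,ℓ+1}` (a path `P_{k+1}` with a path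
`P_{ℓ+1}` attached at an internal vertex `j`), every `p ≥ 2` and
`m = |V(C_{k,ℓ}^{p+1})|`, the edge blow-up `C_{k,ℓ}^{p+1}` is a subgraph of
`Y ∨ K_{p-1}(m,…,m)`. -/
theorem stmt9 (k l p m : ℕ) (hk : 3 ≤ k) (hl : 1 ≤ l) (hp : 2 ≤ p)
    (hm : m = Nat.card (Fin (k + l) ⊕ ((lollipop k l).edgeSet × Fin (p - 1)))) :
    ∀ j : ℕ, 0 < j → j < k →
      IsCont (edgeBlowup (lollipop k l) p)
        (gJoin (Ygraph k l j) (completeMultipartite (p - 1) m)) := by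
  classical
  intro j hj0 hjk
  have hp1 : 0 < p - 1 := by omega
  set v : ℕ := k - j with hvdef
  have hv1 : 1 ≤ v := by omega
  have hvk : v < k := by omega
  obtain ⟨E⟩ : Nonempty ((Fin (k + l) ⊕ ((lollipop k l).edgeSet × Fin (p - 1))) ≃ Fin m) :=
    ⟨Finite.equivFinOfCardEq hm.symm⟩
  refine ⟨sFun k l p m v hp1 hv1 hvk E, ?_, ?_⟩
  · -- injectivity
    rintro (u1 | ⟨e, i⟩) (u2 | ⟨f', i'⟩) h
    · by_cases h1 : u1.val = v <;> by_cases h2 : u2.val = v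
      · exact congrArg Sum.inl (Fin.ext (by omega))
      · simp only [sFun, if_pos h1, if_neg h2] at h
        rcases Nat.lt_or_ge u2.val k with hc | hc
        · rw [dif_pos hc] at h; simp at h
        · rw [dif_neg (by omega)] at h; simp at h
      · simp only [sFun, if_neg h1, if_pos h2] at h
        rcases Nat.lt_or_ge u1.val k with hc | hc
        · rw [dif_pos hc] at h; simp at h
        · rw [dif_neg (by omega)] at h; simp at h
      · simp only [sFun, if_neg h1, if_neg h2] at h
        rcases Nat.lt_or_ge u1.val k with hc1 | hc1 <;>
          rcases Nat.lt_or_ge u2.val k with hc2 | hc2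
        · rw [dif_pos hc1, dif_pos hc2] at h
          simp only [Sum.inl.injEq, Fin.mk.injEq] at h
          rw [pos_eq hv1 hvk hc1, pos_eq hv1 hvk hc2] at h
          split_ifs at h <;> exact congrArg Sum.inl (Fin.ext (by omega))
        · rw [dif_pos hc1, dif_neg (by omega)] at h; simp at h
        · rw [dif_neg (by omega), dif_pos hc2] at h; simp at h
        · rw [dif_neg (by omega), dif_neg (by omega)] at h
          simp only [Sum.inl.injEq, Sum.inr.injEq, Fin.mk.injEq] at h
          exact congrArg Sum.inl (Fin.ext (by omega))
    · by_cases h1 : u1.val = v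
      · by_cases hB1 : (f' : Sym2 (Fin (k + l))) = cyEdge1 k l v hv1 hvk ∧ i'.val = 0
        · simp only [sFun, if_pos h1, if_pos hB1] at h; simp at h
        · by_cases hB2 : (f' : Sym2 (Fin (k + l))) = cyEdge2 k l v hv1 hvk ∧ i'.val = 0
          · simp only [sFun, if_pos h1, if_neg hB1, if_pos hB2] at h; simp at h
          · simp only [sFun, if_pos h1, if_neg hB1, if_neg hB2, Sum.inr.injEq,
              Prod.mk.injEq] at h
            have := E.injective h.2
            simp at this
      · rcases Nat.lt_or_ge u1.val k with hc | hc
        · by_cases hB1 : (f' : Sym2 (Fin (k + l))) = cyEdge1 k l v hv1 hvk ∧ i'.val = 0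
          · simp only [sFun, if_neg h1, dif_pos hc, if_pos hB1, Sum.inl.injEq,
              Fin.mk.injEq] at h
            exfalso; rw [pos_eq hv1 hvk hc] at h; split_ifs at h <;> omega
          · by_cases hB2 : (f' : Sym2 (Fin (k + l))) = cyEdge2 k l v hv1 hvk ∧ i'.val = 0
            · simp only [sFun, if_neg h1, dif_pos hc, if_neg hB1, if_pos hB2, Sum.inl.injEq,
                Fin.mk.injEq] at h
              exfalso; rw [pos_eq hv1 hvk hc] at h; split_ifs at h <;> omega
            · simp only [sFun, if_neg h1, dif_pos hc, if_neg hB1, if_neg hB2] at h; simp at h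
        · by_cases hB1 : (f' : Sym2 (Fin (k + l))) = cyEdge1 k l v hv1 hvk ∧ i'.val = 0
          · simp only [sFun, if_neg h1, dif_neg (by omega : ¬ u1.val < k), if_pos hB1] at h
            simp at h
          · by_cases hB2 : (f' : Sym2 (Fin (k + l))) = cyEdge2 k l v hv1 hvk ∧ i'.val = 0
            · simp only [sFun, if_neg h1, dif_neg (by omega : ¬ u1.val < k), if_neg hB1,
                if_pos hB2] at h
              simp at h
            · simp only [sFun, if_neg h1, dif_neg (by omega : ¬ u1.val < k), if_neg hB1,
                if_neg hB2] at h
              simp at h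
    · by_cases h2 : u2.val = v
      · by_cases hA1 : (e : Sym2 (Fin (k + l))) = cyEdge1 k l v hv1 hvk ∧ i.val = 0
        · simp only [sFun, if_pos h2, if_pos hA1] at h; simp at h
        · by_cases hA2 : (e : Sym2 (Fin (k + l))) = cyEdge2 k l v hv1 hvk ∧ i.val = 0
          · simp only [sFun, if_pos h2, if_neg hA1, if_pos hA2] at h; simp at h
          · simp only [sFun, if_pos h2, if_neg hA1, if_neg hA2, Sum.inr.injEq,
              Prod.mk.injEq] at h
            have := E.injective h.2
            simp at this
      · rcases Nat.lt_or_ge u2.val k with hc | hc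
        · by_cases hA1 : (e : Sym2 (Fin (k + l))) = cyEdge1 k l v hv1 hvk ∧ i.val = 0
          · simp only [sFun, if_neg h2, dif_pos hc, if_pos hA1, Sum.inl.injEq,
              Fin.mk.injEq] at h
            exfalso; rw [pos_eq hv1 hvk hc] at h; split_ifs at h <;> omega
          · by_cases hA2 : (e : Sym2 (Fin (k + l))) = cyEdge2 k l v hv1 hvk ∧ i.val = 0
            · simp only [sFun, if_neg h2, dif_pos hc, if_neg hA1, if_pos hA2, Sum.inl.injEq,
                Fin.mk.injEq] at h
              exfalso; rw [pos_eq hv1 hvk hc] at h; split_ifs at h <;> omega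
            · simp only [sFun, if_neg h2, dif_pos hc, if_neg hA1, if_neg hA2] at h; simp at h
        · by_cases hA1 : (e : Sym2 (Fin (k + l))) = cyEdge1 k l v hv1 hvk ∧ i.val = 0
          · simp only [sFun, if_neg h2, dif_neg (by omega : ¬ u2.val < k), if_pos hA1] at h
            simp at h
          · by_cases hA2 : (e : Sym2 (Fin (k + l))) = cyEdge2 k l v hv1 hvk ∧ i.val = 0
            · simp only [sFun, if_neg h2, dif_neg (by omega : ¬ u2.val < k), if_neg hA1,
                if_pos hA2] at h
              simp at h
            · simp only [sFun, if_neg h2, dif_neg (by omega : ¬ u2.val < k), if_neg hA1,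
                if_neg hA2] at h
              simp at h
    · by_cases hA1 : (e : Sym2 (Fin (k + l))) = cyEdge1 k l v hv1 hvk ∧ i.val = 0
      · by_cases hB1 : (f' : Sym2 (Fin (k + l))) = cyEdge1 k l v hv1 hvk ∧ i'.val = 0
        · have hef : e = f' := Subtype.ext (hA1.1.trans hB1.1.symm)
          have hii : i = i' := Fin.ext (by omega)
          rw [hef, hii]
        · by_cases hB2 : (f' : Sym2 (Fin (k + l))) = cyEdge2 k l v hv1 hvk ∧ i'.val = 0
          · simp only [sFun, if_pos hA1, if_neg hB1, if_pos hB2, Sum.inl.injEq,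
              Fin.mk.injEq] at h
            omega
          · simp only [sFun, if_pos hA1, if_neg hB1, if_neg hB2] at h; simp at h
      · by_cases hA2 : (e : Sym2 (Fin (k + l))) = cyEdge2 k l v hv1 hvk ∧ i.val = 0
        · by_cases hB1 : (f' : Sym2 (Fin (k + l))) = cyEdge1 k l v hv1 hvk ∧ i'.val = 0
          · simp only [sFun, if_neg hA1, if_pos hA2, if_pos hB1, Sum.inl.injEq,
              Fin.mk.injEq] at h
            omega
          · by_cases hB2 : (f' : Sym2 (Fin (k + l))) = cyEdge2 k l v hv1 hvk ∧ i'.val = 0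
            · have hef : e = f' := Subtype.ext (hA2.1.trans hB2.1.symm)
              have hii : i = i' := Fin.ext (by omega)
              rw [hef, hii]
            · simp only [sFun, if_neg hA1, if_pos hA2, if_neg hB1, if_neg hB2] at h; simp at h
        · by_cases hB1 : (f' : Sym2 (Fin (k + l))) = cyEdge1 k l v hv1 hvk ∧ i'.val = 0
          · simp only [sFun, if_neg hA1, if_neg hA2, if_pos hB1] at h; simp at h
          · by_cases hB2 : (f' : Sym2 (Fin (k + l))) = cyEdge2 k l v hv1 hvk ∧ i'.val = 0
            · simp only [sFun, if_neg hA1, if_neg hA2, if_neg hB1, if_pos hB2] at h; simp at h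
            · simp only [sFun, if_neg hA1, if_neg hA2, if_neg hB1, if_neg hB2, Sum.inr.injEq,
                Prod.mk.injEq] at h
              obtain ⟨hi, hEe⟩ := h
              have hef := E.injective hEe
              simp only [Sum.inr.injEq, Prod.mk.injEq, and_true] at hef
              rw [hi, hef]
  · -- adjacency
    have key0 : ∀ a b : Fin (k + l), (lollipop k l).Adj a b →
        (gJoin (Ygraph k l j) (completeMultipartite (p - 1) m)).Adj
          (sFun k l p m v hp1 hv1 hvk E (.inl a)) (sFun k l p m v hp1 hv1 hvk E (.inl b)) := by
      intro a b hadj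
      have hne : a ≠ b := hadj.ne
      by_cases hav : a.val = v
      · by_cases hbv : b.val = v
        · exact absurd (Fin.ext (by omega)) hne
        · simp only [sFun, if_pos hav, if_neg hbv]
          split <;> trivial
      · by_cases hbv : b.val = v
        · simp only [sFun, if_neg hav, if_pos hbv]
          split <;> trivial
        · simp only [sFun, if_neg hav, if_neg hbv]
          rw [lolli_adj] at hadj
          obtain ⟨-, hd⟩ := hadj
          rcases hd with ⟨h1, h2⟩|⟨h1, h2⟩|⟨h1, h2⟩|⟨h1, h2⟩|⟨h1, h2⟩|⟨h1, h2⟩|⟨h1, h2⟩|⟨h1, h2⟩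
          · rw [dif_pos (show a.val < k by omega), dif_pos h2]
            exact gYadj_path (by
              simp only [Fin.val_mk]
              rw [pos_eq (u := (b:ℕ)) hv1 hvk h2, pos_eq (u := (a:ℕ)) hv1 hvk (by omega)]
              split_ifs <;> omega)
          · rw [dif_pos (show a.val < k by omega), dif_pos (show b.val < k by omega)]
            exact (gYadj_path (by
              simp only [Fin.val_mk]
              rw [pos_eq (u := (a:ℕ)) hv1 hvk (by omega), pos_eq (u := (b:ℕ)) hv1 hvk (by omega)]
              split_ifs <;> omega)).symm
          · rw [dif_pos (show a.val < k by omega), dif_neg (show ¬ b.val < k by omega)]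
            exact gYadj_branch (by
              simp only [Fin.val_mk]
              rw [pos_eq hv1 hvk (by omega)]
              split_ifs <;> omega) (by simp only [Fin.val_mk]; omega)
          · rw [dif_neg (show ¬ a.val < k by omega), dif_neg (show ¬ b.val < k by omega)]
            exact gYadj_tail (by simp only [Fin.val_mk]; omega)
          · rw [dif_pos h2, dif_pos (show b.val < k by omega)]
            exact (gYadj_path (by
              simp only [Fin.val_mk]
              rw [pos_eq (u := (a:ℕ)) hv1 hvk (by omega), pos_eq (u := (b:ℕ)) hv1 hvk (by omega)]
              split_ifs <;> omega)).symm
          · rw [dif_pos (show a.val < k by omega), dif_pos (show b.val < k by omega)]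
            exact gYadj_path (by
              simp only [Fin.val_mk]
              rw [pos_eq (u := (b:ℕ)) hv1 hvk (by omega), pos_eq (u := (a:ℕ)) hv1 hvk (by omega)]
              split_ifs <;> omega)
          · rw [dif_neg (show ¬ a.val < k by omega), dif_pos (show b.val < k by omega)]
            exact (gYadj_branch (by
              simp only [Fin.val_mk]
              rw [pos_eq hv1 hvk (by omega)]
              split_ifs <;> omega) (by simp only [Fin.val_mk]; omega)).symm
          · rw [dif_neg (show ¬ a.val < k by omega), dif_neg (show ¬ b.val < k by omega)]
            exact (gYadj_tail (by simp only [Fin.val_mk]; omega)).symm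
    have key1 : ∀ (a : Fin (k + l)) (e : (lollipop k l).edgeSet) (i : Fin (p - 1)),
        a ∈ (e : Sym2 (Fin (k + l))) →
        (gJoin (Ygraph k l j) (completeMultipartite (p - 1) m)).Adj
          (sFun k l p m v hp1 hv1 hvk E (.inl a))
          (sFun k l p m v hp1 hv1 hvk E (.inr (e, i))) := by
      intro a e i hmem
      by_cases hsp1 : (e : Sym2 (Fin (k + l))) = cyEdge1 k l v hv1 hvk ∧ i.val = 0
      · simp only [sFun, if_pos hsp1]
        by_cases hav : a.val = v
        · rw [if_pos hav]; trivial
        · have ha : a.val = v - 1 := by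
            rw [hsp1.1, cyEdge1, Sym2.mem_iff] at hmem
            rcases hmem with hq | hq
            · rw [hq]
            · exact absurd (congrArg Fin.val hq) hav
          rw [if_neg hav, dif_pos (show a.val < k by omega)]
          exact gYadj_path (by
            simp only [Fin.val_mk]
            rw [pos_eq hv1 hvk (by omega)]
            split_ifs <;> omega)
      · by_cases hsp2 : (e : Sym2 (Fin (k + l))) = cyEdge2 k l v hv1 hvk ∧ i.val = 0
        · simp only [sFun, if_neg hsp1, if_pos hsp2]
          by_cases hav : a.val = v
          · rw [if_pos hav]; trivial
          · have hw := mod_alt (k := k) hv1 hvk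
            have ha : a.val = (v + 1) % k := by
              rw [hsp2.1, cyEdge2, Sym2.mem_iff] at hmem
              rcases hmem with hq | hq
              · exact absurd (congrArg Fin.val hq) hav
              · rw [hq]
            have hak : a.val < k := by rcases hw with ⟨hw, hw'⟩ | ⟨hw, hw'⟩ <;> omega
            rw [if_neg hav, dif_pos hak]
            exact (gYadj_path (by
              simp only [Fin.val_mk]
              rw [pos_eq hv1 hvk hak]
              rcases hw with ⟨hw, hw'⟩ | ⟨hw, hw'⟩ <;> split_ifs <;> omega)).symm
        · simp only [sFun, if_neg hsp1, if_neg hsp2]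
          by_cases hav : a.val = v
          · rw [if_pos hav]
            have hmv : (⟨v, by omega⟩ : Fin (k + l)) ∈ (e : Sym2 (Fin (k + l))) := by
              rw [show (⟨v, by omega⟩ : Fin (k + l)) = a from Fin.ext hav.symm]
              exact hmem
            have he12 := edge_at_v hk hv1 hvk (e : Sym2 (Fin (k + l))) e.2 hmv
            have hi : i.val ≠ 0 := by
              rcases he12 with he | he
              · exact fun h0 => hsp1 ⟨he, h0⟩
              · exact fun h0 => hsp2 ⟨he, h0⟩
            exact fun hc => hi (congrArg Fin.val hc).symm
          · rw [if_neg hav]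
            split <;> trivial
    rintro (a | ⟨e, i⟩) (b | ⟨f', i'⟩) hadj
    · exact key0 a b hadj
    · exact key1 a f' i' hadj
    · exact (key1 b e i hadj).symm
    · obtain ⟨hef, hii⟩ := hadj
      have hef' : e = f' := hef
      subst hef'
      have hii' : i ≠ i' := hii
      by_cases hi : i.val = 0
      · have hiv : i'.val ≠ 0 := fun h0 => hii' (Fin.ext (by omega))
        have hB1 : ¬((e : Sym2 (Fin (k + l))) = cyEdge1 k l v hv1 hvk ∧ i'.val = 0) :=
          fun hq => hiv hq.2
        have hB2 : ¬((e : Sym2 (Fin (k + l))) = cyEdge2 k l v hv1 hvk ∧ i'.val = 0) :=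
          fun hq => hiv hq.2
        by_cases hA1 : (e : Sym2 (Fin (k + l))) = cyEdge1 k l v hv1 hvk ∧ i.val = 0
        · simp only [sFun, if_pos hA1, if_neg hB1, if_neg hB2]; trivial
        · by_cases hA2 : (e : Sym2 (Fin (k + l))) = cyEdge2 k l v hv1 hvk ∧ i.val = 0
          · simp only [sFun, if_neg hA1, if_pos hA2, if_neg hB1, if_neg hB2]; trivial
          · simp only [sFun, if_neg hA1, if_neg hA2, if_neg hB1, if_neg hB2]
            exact hii'
      · have hA1 : ¬((e : Sym2 (Fin (k + l))) = cyEdge1 k l v hv1 hvk ∧ i.val = 0) :=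
          fun hq => hi hq.2
        have hA2 : ¬((e : Sym2 (Fin (k + l))) = cyEdge2 k l v hv1 hvk ∧ i.val = 0) :=
          fun hq => hi hq.2
        by_cases hB1 : (e : Sym2 (Fin (k + l))) = cyEdge1 k l v hv1 hvk ∧ i'.val = 0
        · simp only [sFun, if_neg hA1, if_neg hA2, if_pos hB1]; trivial
        · by_cases hB2 : (e : Sym2 (Fin (k + l))) = cyEdge2 k l v hv1 hvk ∧ i'.val = 0
          · simp only [sFun, if_neg hA1, if_neg hA2, if_neg hB1, if_pos hB2]; trivial
          · simp only [sFun, if_neg hA1, if_neg hA2, if_neg hB1, if_neg hB2]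
            exact hii'
end

section
/- Let ℓ ≥ 3 be odd. Splitting an appropriate independent set of the lollipop C_{3,ℓ} yields the graph P_4 ∪ ((ℓ-1)/2)·P_3 ∪ P_2, and hence C_{3,ℓ}^3 is a subgraph of (P_4 ∪ ((ℓ-1)/2)·P_3 ∪ P_2) ∨ I_m for m = |V(C_{3,ℓ}^3)|. -/
open SimpleGraph

open SimpleGraph Function

lemma lollipop_adj_val {l : ℕ} {a b : Fin (3 + l)} :
    (lollipop 3 l).Adj a b ↔ a.val ≠ b.val ∧
      ((b.val = a.val + 1 ∧ b.val < 3) ∨ (a.val = 0 ∧ b.val = 2) ∨ (a.val = 0 ∧ b.val = 3) ∨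
        (b.val = a.val + 1 ∧ 3 ≤ a.val) ∨
       (a.val = b.val + 1 ∧ a.val < 3) ∨ (b.val = 0 ∧ a.val = 2) ∨ (b.val = 0 ∧ a.val = 3) ∨
        (a.val = b.val + 1 ∧ 3 ≤ b.val)) := by
  simp only [lollipop, SimpleGraph.fromRel_adj, ne_eq, Fin.ext_iff]
  omega

lemma lollipop_adj_mk {l a b : ℕ} (ha : a < 3 + l) (hb : b < 3 + l) :
    (lollipop 3 l).Adj ⟨a, ha⟩ ⟨b, hb⟩ ↔ a ≠ b ∧
      ((b = a + 1 ∧ b < 3) ∨ (a = 0 ∧ b = 2) ∨ (a = 0 ∧ b = 3) ∨ (b = a + 1 ∧ 3 ≤ a) ∨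
       (a = b + 1 ∧ a < 3) ∨ (b = 0 ∧ a = 2) ∨ (b = 0 ∧ a = 3) ∨ (a = b + 1 ∧ 3 ≤ b)) := by
  rw [lollipop_adj_val]
@[simp] lemma splitGraph_adj_inl_inl {V : Type*} (H : SimpleGraph V) (U : Set V) (a b) :
    (splitGraph H U).Adj (.inl a) (.inl b) ↔ H.Adj a.1 b.1 := Iff.rfl
@[simp] lemma splitGraph_adj_inl_inr {V : Type*} (H : SimpleGraph V) (U : Set V) (a e) :
    (splitGraph H U).Adj (.inl a) (.inr e) ↔ e.1.2 = a.1 := Iff.rfl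
@[simp] lemma splitGraph_adj_inr_inl {V : Type*} (H : SimpleGraph V) (U : Set V) (a e) :
    (splitGraph H U).Adj (.inr e) (.inl a) ↔ e.1.2 = a.1 := Iff.rfl
@[simp] lemma splitGraph_adj_inr_inr {V : Type*} (H : SimpleGraph V) (U : Set V) (e f) :
    (splitGraph H U).Adj (.inr e) (.inr f) ↔ False := Iff.rfl
@[simp] lemma dUnion_adj_inl_inl {α β : Type*} (G : SimpleGraph α) (H : SimpleGraph β) (a b) :
    (dUnion G H).Adj (.inl a) (.inl b) ↔ G.Adj a b := Iff.rfl
@[simp] lemma dUnion_adj_inl_inr {α β : Type*} (G : SimpleGraph α) (H : SimpleGraph β) (a b) :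
    (dUnion G H).Adj (.inl a) (.inr b) ↔ False := Iff.rfl
@[simp] lemma dUnion_adj_inr_inl {α β : Type*} (G : SimpleGraph α) (H : SimpleGraph β) (a b) :
    (dUnion G H).Adj (.inr a) (.inl b) ↔ False := Iff.rfl
@[simp] lemma dUnion_adj_inr_inr {α β : Type*} (G : SimpleGraph α) (H : SimpleGraph β) (a b) :
    (dUnion G H).Adj (.inr a) (.inr b) ↔ H.Adj a b := Iff.rfl
@[simp] lemma gJoin_adj_inl_inl {α β : Type*} (G : SimpleGraph α) (H : SimpleGraph β) (a b) :
    (gJoin G H).Adj (.inl a) (.inl b) ↔ G.Adj a b := Iff.rfl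
@[simp] lemma gJoin_adj_inl_inr {α β : Type*} (G : SimpleGraph α) (H : SimpleGraph β) (a b) :
    (gJoin G H).Adj (.inl a) (.inr b) := trivial
@[simp] lemma gJoin_adj_inr_inl {α β : Type*} (G : SimpleGraph α) (H : SimpleGraph β) (a b) :
    (gJoin G H).Adj (.inr a) (.inl b) := trivial
@[simp] lemma gJoin_adj_inr_inr {α β : Type*} (G : SimpleGraph α) (H : SimpleGraph β) (a b) :
    (gJoin G H).Adj (.inr a) (.inr b) ↔ H.Adj a b := Iff.rfl
@[simp] lemma copies_adj {β : Type*} (a : ℕ) (G : SimpleGraph β) (x y) :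
    (copies a G).Adj x y ↔ x.1 = y.1 ∧ G.Adj x.2 y.2 := Iff.rfl
@[simp] lemma edgeBlowup_adj_inl_inl {V : Type*} (H : SimpleGraph V) (p : ℕ) (a b) :
    (edgeBlowup H p).Adj (.inl a) (.inl b) ↔ H.Adj a b := Iff.rfl
@[simp] lemma edgeBlowup_adj_inl_inr {V : Type*} (H : SimpleGraph V) (p : ℕ) (a e) :
    (edgeBlowup H p).Adj (.inl a) (.inr e) ↔ a ∈ (e.1.1 : Sym2 V) := Iff.rfl
@[simp] lemma edgeBlowup_adj_inr_inl {V : Type*} (H : SimpleGraph V) (p : ℕ) (a e) :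
    (edgeBlowup H p).Adj (.inr e) (.inl a) ↔ a ∈ (e.1.1 : Sym2 V) := Iff.rfl
@[simp] lemma edgeBlowup_adj_inr_inr {V : Type*} (H : SimpleGraph V) (p : ℕ) (e f) :
    (edgeBlowup H p).Adj (.inr e) (.inr f) ↔ e.1 = f.1 ∧ e.2 ≠ f.2 := Iff.rfl

def Uk (k : ℕ) : Set (Fin (3 + (2*k+1))) :=
  {v | v.val = 0 ∨ (v.val % 2 = 0 ∧ 4 ≤ v.val ∧ v.val ≤ 2*k + 2)}

lemma mem_Uk {k : ℕ} {v : Fin (3 + (2*k+1))} :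
    v ∈ Uk k ↔ (v.val = 0 ∨ (v.val % 2 = 0 ∧ 4 ≤ v.val ∧ v.val ≤ 2*k + 2)) := Iff.rfl
abbrev SType (k : ℕ) :=
  {v : Fin (3 + (2*k+1)) // v ∉ Uk k} ⊕
    {p : Fin (3 + (2*k+1)) × Fin (3 + (2*k+1)) //
      p.1 ∈ Uk k ∧ (lollipop 3 (2*k+1)).Adj p.1 p.2}

abbrev TType (k : ℕ) := Fin 4 ⊕ (Fin k × Fin 3 ⊕ Fin 2)

def enc (k : ℕ) (hk : 1 ≤ k) : TType k → SType k
  | .inl ⟨0, _⟩ => .inr ⟨(⟨0, by omega⟩, ⟨1, by omega⟩),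
      by simp [mem_Uk, Fin.val_mk] <;> omega, by rw [lollipop_adj_mk]; omega⟩
  | .inl ⟨1, _⟩ => .inl ⟨⟨1, by omega⟩, by simp [mem_Uk, Fin.val_mk] <;> omega⟩
  | .inl ⟨2, _⟩ => .inl ⟨⟨2, by omega⟩, by simp [mem_Uk, Fin.val_mk] <;> omega⟩
  | .inl ⟨3, _⟩ => .inr ⟨(⟨0, by omega⟩, ⟨2, by omega⟩),
      by simp [mem_Uk, Fin.val_mk] <;> omega, by rw [lollipop_adj_mk]; omega⟩
  | .inl ⟨j+4, h⟩ => absurd h (by omega)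
  | .inr (.inl (⟨0, _⟩, ⟨0, _⟩)) => .inr ⟨(⟨0, by omega⟩, ⟨3, by omega⟩),
      by simp [mem_Uk, Fin.val_mk] <;> omega, by rw [lollipop_adj_mk]; omega⟩
  | .inr (.inl (⟨j+1, hj⟩, ⟨0, _⟩)) => .inr ⟨(⟨2*j+4, by omega⟩, ⟨2*j+5, by omega⟩),
      by simp [mem_Uk, Fin.val_mk] <;> omega, by rw [lollipop_adj_mk]; omega⟩
  | .inr (.inl (⟨i, hi⟩, ⟨1, _⟩)) => .inl ⟨⟨2*i+3, by omega⟩,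
      by simp [mem_Uk, Fin.val_mk] <;> omega⟩
  | .inr (.inl (⟨i, hi⟩, ⟨2, _⟩)) => .inr ⟨(⟨2*i+4, by omega⟩, ⟨2*i+3, by omega⟩),
      by simp [mem_Uk, Fin.val_mk] <;> omega, by rw [lollipop_adj_mk]; omega⟩
  | .inr (.inl (_, ⟨j+3, hj⟩)) => absurd hj (by omega)
  | .inr (.inr ⟨0, _⟩) => .inr ⟨(⟨2*k+2, by omega⟩, ⟨2*k+3, by omega⟩),
      by simp [mem_Uk, Fin.val_mk] <;> omega, by rw [lollipop_adj_mk]; omega⟩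
  | .inr (.inr ⟨1, _⟩) => .inl ⟨⟨2*k+3, by omega⟩, by simp [mem_Uk, Fin.val_mk] <;> omega⟩
  | .inr (.inr ⟨j+2, hj⟩) => absurd hj (by omega)

def dec (k : ℕ) (hk : 1 ≤ k) : SType k → TType k
  | .inl ⟨⟨v, hvl⟩, hv⟩ =>
    if h1 : v = 1 then .inl ⟨1, by omega⟩
    else if h2 : v = 2 then .inl ⟨2, by omega⟩
    else if h3 : v = 2*k+3 then .inr (.inr ⟨1, by omega⟩)
    else .inr (.inl (⟨(v - 3)/2, by
      have hv' : ¬(v = 0 ∨ (v % 2 = 0 ∧ 4 ≤ v ∧ v ≤ 2*k+2)) := by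
        simpa only [mem_Uk, Fin.val_mk] using hv
      omega⟩, ⟨1, by omega⟩))
  | .inr ⟨(⟨u, hul⟩, ⟨w, hwl⟩), hp⟩ =>
    if h0 : u = 0 then
      if hw1 : w = 1 then .inl ⟨0, by omega⟩
      else if hw2 : w = 2 then .inl ⟨3, by omega⟩
      else .inr (.inl (⟨0, hk⟩, ⟨0, by omega⟩))
    else
      if hw : w = u + 1 then
        if h2 : w = 2*k+3 then .inr (.inr ⟨0, by omega⟩)
        else .inr (.inl (⟨(u - 2)/2, by
          have hu' : u = 0 ∨ (u % 2 = 0 ∧ 4 ≤ u ∧ u ≤ 2*k+2) := by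
            simpa only [mem_Uk, Fin.val_mk] using hp.1
          omega⟩, ⟨0, by omega⟩))
      else .inr (.inl (⟨(u - 4)/2, by
          have hu' : u = 0 ∨ (u % 2 = 0 ∧ 4 ≤ u ∧ u ≤ 2*k+2) := by
            simpa only [mem_Uk, Fin.val_mk] using hp.1
          omega⟩, ⟨2, by omega⟩))
set_option maxHeartbeats 1000000 in
lemma enc_dec (k : ℕ) (hk : 1 ≤ k) : ∀ t, dec k hk (enc k hk t) = t := by
  have closer : True := trivial
  rintro (⟨ai, hai⟩ | (⟨⟨ai, hai⟩, ⟨aj, haj⟩⟩ | ⟨aj, haj⟩))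
  · interval_cases ai <;>
      (simp only [enc, dec]; split_ifs <;>
        first
          | rfl
          | (exfalso; first | omega | assumption)
          | (simp only [Nat.zero_eq, Nat.succ_eq_add_one, Sum.inl.injEq, Sum.inr.injEq,
              Prod.mk.injEq, Subtype.mk.injEq, Fin.mk.injEq, reduceCtorEq, and_true, true_and]; omega))
  · interval_cases aj <;> rcases ai with _ | ai <;>
      (simp only [enc, dec, Nat.zero_eq, Nat.succ_eq_add_one]; split_ifs <;>
        first
          | rfl
          | (exfalso; first | omega | assumption)
          | (simp only [Nat.zero_eq, Nat.succ_eq_add_one, Sum.inl.injEq, Sum.inr.injEq,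
              Prod.mk.injEq, Subtype.mk.injEq, Fin.mk.injEq, reduceCtorEq, and_true, true_and]; omega))
  · interval_cases aj <;>
      (simp only [enc, dec]; split_ifs <;>
        first
          | rfl
          | (exfalso; first | omega | assumption)
          | (simp only [Nat.zero_eq, Nat.succ_eq_add_one, Sum.inl.injEq, Sum.inr.injEq,
              Prod.mk.injEq, Subtype.mk.injEq, Fin.mk.injEq, reduceCtorEq, and_true, true_and]; omega))
set_option maxHeartbeats 1000000 in
lemma dec_enc (k : ℕ) (hk : 1 ≤ k) : ∀ s, enc k hk (dec k hk s) = s := by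
  rintro (⟨⟨v, hvl⟩, hv⟩ | ⟨⟨⟨u, hul⟩, ⟨w, hwl⟩⟩, hp⟩)
  · have hv' : ¬(v = 0 ∨ (v % 2 = 0 ∧ 4 ≤ v ∧ v ≤ 2*k+2)) := hv
    simp only [dec]
    split_ifs with h1 h2 h3
    · subst h1; rfl
    · subst h2; rfl
    · subst h3; rfl
    · simp only [enc, Sum.inl.injEq, Subtype.mk.injEq, Fin.mk.injEq]
      omega
  · have hu' : u = 0 ∨ (u % 2 = 0 ∧ 4 ≤ u ∧ u ≤ 2*k+2) := hp.1
    have hadj' := (lollipop_adj_mk hul hwl).mp hp.2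
    simp only [dec]
    split_ifs with h0 hw1 hw2 hw h2
    · simp only [enc, Sum.inr.injEq, Subtype.mk.injEq, Prod.mk.injEq, Fin.mk.injEq]; omega
    · simp only [enc, Sum.inr.injEq, Subtype.mk.injEq, Prod.mk.injEq, Fin.mk.injEq]; omega
    · simp only [enc, Sum.inr.injEq, Subtype.mk.injEq, Prod.mk.injEq, Fin.mk.injEq]; omega
    · simp only [enc, Sum.inr.injEq, Subtype.mk.injEq, Prod.mk.injEq, Fin.mk.injEq]; omega
    · obtain ⟨j, hj⟩ : ∃ j, (u - 2)/2 = j + 1 := ⟨(u-2)/2 - 1, by omega⟩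
      simp only [hj, enc, Sum.inr.injEq, Subtype.mk.injEq, Prod.mk.injEq, Fin.mk.injEq]
      omega
    · simp only [enc, Sum.inr.injEq, Subtype.mk.injEq, Prod.mk.injEq, Fin.mk.injEq]; omega
set_option maxHeartbeats 4000000 in
lemma enc_adj (k : ℕ) (hk : 1 ≤ k) : ∀ a b : TType k,
    (splitGraph (lollipop 3 (2*k+1)) (Uk k)).Adj (enc k hk a) (enc k hk b) ↔
    (dUnion (pathGraph 4) (dUnion (copies k (pathGraph 3)) (pathGraph 2))).Adj a b := by
  rintro (⟨ai, hai⟩ | (⟨⟨ai, hai⟩, ⟨aj, haj⟩⟩ | ⟨aj, haj⟩))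
    (⟨bi, hbi⟩ | (⟨⟨bi, hbi⟩, ⟨bj, hbj⟩⟩ | ⟨bj, hbj⟩)) <;>
  [skip; skip; skip; skip; skip; skip; skip; skip; skip] <;>
  first
  | (try interval_cases ai) <;> (try interval_cases bi) <;>
    (try interval_cases aj) <;> (try interval_cases bj) <;>
    (try rcases ai with _ | ai) <;> (try rcases bi with _ | bi) <;>
    (simp only [enc, Nat.zero_eq, Nat.succ_eq_add_one, splitGraph_adj_inl_inl,
      splitGraph_adj_inl_inr, splitGraph_adj_inr_inl, splitGraph_adj_inr_inr,
      dUnion_adj_inl_inl, dUnion_adj_inl_inr, dUnion_adj_inr_inl, dUnion_adj_inr_inr,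
      copies_adj, pathGraph_adj, lollipop_adj_mk, Fin.mk.injEq, Fin.val_mk,
      Prod.mk.injEq, Subtype.mk.injEq, and_true, true_and, iff_true, true_iff,
      false_iff, iff_false, not_and, not_or, ne_eq, reduceCtorEq,
      not_false_eq_true, not_true_eq_false, or_false, false_or, or_true, true_or,
      and_false, false_and, and_self, or_self] <;>
    first | trivial | omega)
def theIso (k : ℕ) (hk : 1 ≤ k) :
    (dUnion (pathGraph 4) (dUnion (copies k (pathGraph 3)) (pathGraph 2))) ≃g
      splitGraph (lollipop 3 (2*k+1)) (Uk k) where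
  toFun := enc k hk
  invFun := dec k hk
  left_inv := enc_dec k hk
  right_inv := dec_enc k hk
  map_rel_iff' := @fun a b => enc_adj k hk a b

lemma Uk_indep (k : ℕ) : ∀ u ∈ Uk k, ∀ v ∈ Uk k, ¬ (lollipop 3 (2*k+1)).Adj u v := by
  intro u hu v hv hadj
  rw [lollipop_adj_val] at hadj
  have hu2 : u.val = 0 ∨ (u.val % 2 = 0 ∧ 4 ≤ u.val ∧ u.val ≤ 2*k+2) := hu
  have hv2 : v.val = 0 ∨ (v.val % 2 = 0 ∧ 4 ≤ v.val ∧ v.val ≤ 2*k+2) := hv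
  omega
lemma cont_of_split {V γ : Type*} [Finite V] {H : SimpleGraph V} {U : Set V}
    (hU : ∀ u ∈ U, ∀ v ∈ U, ¬ H.Adj u v) {G : SimpleGraph γ}
    (φ : splitGraph H U ≃g G) {m : ℕ}
    (hm : m = Nat.card (V ⊕ (H.edgeSet × Fin (2 - 1)))) :
    IsCont (edgeBlowup H 2) (gJoin G (⊥ : SimpleGraph (Fin m))) := by
  classical
  obtain e0 : (V ⊕ (H.edgeSet × Fin (2 - 1))) ≃ Fin m := Finite.equivFinOfCardEq hm.symm
  refine ⟨fun x =>
    match x with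
    | .inl v =>
        if h : v ∈ U then .inr (e0 (.inl v)) else .inl (φ (.inl ⟨v, h⟩))
    | .inr p =>
        if h : ∃ u, u ∈ U ∧ u ∈ (p.1 : Sym2 V) then
          .inl (φ (.inr ⟨(h.choose, Sym2.Mem.other h.choose_spec.2),
            h.choose_spec.1, by
              rw [← H.mem_edgeSet, Sym2.other_spec h.choose_spec.2]; exact p.1.2⟩))
        else .inr (e0 (.inr p)), ?_, ?_⟩
  · -- injectivity
    rintro (a | p) (b | q) hxy
    · by_cases ha : a ∈ U <;> by_cases hb : b ∈ U <;>
        simp only [dif_pos, dif_neg, ha, hb, dite_true, dite_false, Sum.inr.injEq,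
          Sum.inl.injEq, reduceCtorEq] at hxy
      · exact congrArg Sum.inl (Sum.inl.inj (e0.injective hxy))
      · have h2 : (⟨a, ha⟩ : {v : V // v ∉ U}) = ⟨b, hb⟩ :=
          Sum.inl.inj (φ.toEquiv.injective hxy)
        exact congrArg Sum.inl (congrArg Subtype.val h2)
    · exfalso
      by_cases ha : a ∈ U <;> by_cases hq : ∃ u, u ∈ U ∧ u ∈ (q.1 : Sym2 V) <;>
        simp only [ha, hq, dite_true, dite_false, Sum.inr.injEq, Sum.inl.injEq,
          reduceCtorEq] at hxy
      · exact absurd (e0.injective hxy) (by simp)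
      · exact absurd (φ.toEquiv.injective hxy) (by simp)
    · exfalso
      by_cases hb : b ∈ U <;> by_cases hp : ∃ u, u ∈ U ∧ u ∈ (p.1 : Sym2 V) <;>
        simp only [hb, hp, dite_true, dite_false, Sum.inr.injEq, Sum.inl.injEq,
          reduceCtorEq] at hxy
      · exact absurd (e0.injective hxy) (by simp)
      · exact absurd (φ.toEquiv.injective hxy) (by simp)
    · by_cases hp : ∃ u, u ∈ U ∧ u ∈ (p.1 : Sym2 V) <;>
        by_cases hq : ∃ u, u ∈ U ∧ u ∈ (q.1 : Sym2 V) <;>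
        simp only [hp, hq, dite_true, dite_false, Sum.inr.injEq, Sum.inl.injEq,
          reduceCtorEq] at hxy
      · have h2 := Sum.inr.inj (φ.toEquiv.injective hxy)
        have h3 : (hp.choose, Sym2.Mem.other hp.choose_spec.2) =
            (hq.choose, Sym2.Mem.other hq.choose_spec.2) := congrArg Subtype.val h2
        have h4 : (p.1 : Sym2 V) = (q.1 : Sym2 V) := by
          rw [← Sym2.other_spec hp.choose_spec.2, ← Sym2.other_spec hq.choose_spec.2]
          exact congrArg (fun x : V × V => s(x.1, x.2)) h3
        have h5 : p.1 = q.1 := Subtype.ext h4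
        have h6 : p.2 = q.2 := by
          have := p.2.isLt; have := q.2.isLt
          exact Fin.ext (by omega)
        exact congrArg Sum.inr (Prod.ext h5 h6)
      · exact congrArg Sum.inr (Sum.inr.inj (e0.injective hxy))
  · -- homomorphism
    have key : ∀ (a : V) (p : H.edgeSet × Fin (2-1)), a ∈ (p.1 : Sym2 V) →
        (gJoin G (⊥ : SimpleGraph (Fin m))).Adj
          (if h : a ∈ U then .inr (e0 (.inl a)) else .inl (φ (.inl ⟨a, h⟩)))
          (if h : ∃ u, u ∈ U ∧ u ∈ (p.1 : Sym2 V) then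
            .inl (φ (.inr ⟨(h.choose, Sym2.Mem.other h.choose_spec.2),
              h.choose_spec.1, by
                rw [← H.mem_edgeSet, Sym2.other_spec h.choose_spec.2]; exact p.1.2⟩))
          else .inr (e0 (.inr p))) := by
      intro a p hmem
      by_cases ha : a ∈ U
      · have hex : ∃ u, u ∈ U ∧ u ∈ (p.1 : Sym2 V) := ⟨a, ha, hmem⟩
        rw [dif_pos ha, dif_pos hex]
        exact gJoin_adj_inr_inl _ _ _ _
      · rw [dif_neg ha]
        by_cases hex : ∃ u, u ∈ U ∧ u ∈ (p.1 : Sym2 V)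
        · rw [dif_pos hex]
          rw [gJoin_adj_inl_inl]
          refine φ.map_rel_iff.mpr ?_
          rw [splitGraph_adj_inl_inr]
          have hother : a = Sym2.Mem.other hex.choose_spec.2 := by
            have hsp := Sym2.other_spec hex.choose_spec.2
            rw [← hsp, Sym2.mem_iff] at hmem
            rcases hmem with rfl | rfl
            · exact absurd hex.choose_spec.1 ha
            · rfl
          exact hother.symm
        · rw [dif_neg hex]
          exact gJoin_adj_inl_inr _ _ _ _
    rintro (a | p) (b | q) hadj
    · rw [edgeBlowup_adj_inl_inl] at hadj
      by_cases ha : a ∈ U <;> by_cases hb : b ∈ U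
      · exact absurd hadj (hU a ha b hb)
      · simp only [dif_pos ha, dif_neg hb]; exact gJoin_adj_inr_inl _ _ _ _
      · simp only [dif_neg ha, dif_pos hb]; exact gJoin_adj_inl_inr _ _ _ _
      · simp only [dif_neg ha, dif_neg hb, gJoin_adj_inl_inl]
        exact φ.map_rel_iff.mpr hadj
    · exact key a q (edgeBlowup_adj_inl_inr H 2 a q |>.mp hadj)
    · exact (key b p (edgeBlowup_adj_inr_inl H 2 b p |>.mp hadj)).symm
    · rw [edgeBlowup_adj_inr_inr] at hadj
      exact absurd (Fin.ext (by have := p.2.isLt; have := q.2.isLt; omega : p.2.val = q.2.val))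
        hadj.2
/-- For odd `ℓ ≥ 3`, splitting an appropriate independent set of the
lollipop `C_{3,ℓ}` yields `P_4 ∪ ((ℓ-1)/2)·P_3 ∪ P_2`, and hence `C_{3,ℓ}^3` is a
subgraph of `(P_4 ∪ ((ℓ-1)/2)·P_3 ∪ P_2) ∨ I_m` for `m = |V(C_{3,ℓ}^3)|`. -/
theorem stmt18 (l m : ℕ) (hl : 3 ≤ l) (hlo : Odd l)
    (hm : m = Nat.card (Fin (3 + l) ⊕ ((lollipop 3 l).edgeSet × Fin (2 - 1)))) :
    (∃ U : Set (Fin (3 + l)),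
      (∀ u ∈ U, ∀ v ∈ U, ¬ (lollipop 3 l).Adj u v) ∧
      Nonempty (splitGraph (lollipop 3 l) U ≃g
        dUnion (pathGraph 4)
          (dUnion (copies ((l - 1) / 2) (pathGraph 3)) (pathGraph 2)))) ∧
    IsCont (edgeBlowup (lollipop 3 l) 2)
      (gJoin
        (dUnion (pathGraph 4)
          (dUnion (copies ((l - 1) / 2) (pathGraph 3)) (pathGraph 2)))
        (⊥ : SimpleGraph (Fin m))) := by
  obtain ⟨k, rfl⟩ := hlo
  have hk : 1 ≤ k := by omega
  have hdiv : (2 * k + 1 - 1) / 2 = k := by omega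
  rw [hdiv]
  exact ⟨⟨Uk k, Uk_indep k, ⟨(theIso k hk).symm⟩⟩,
    cont_of_split (Uk_indep k) (theIso k hk).symm hm⟩
end
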